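/- Let m > 4 and β ∈ ℕ, and let C^β[1] denote the result of applying the operator C β times to the constant polynomial 1 (which lies in 𝒫_{0,0} and is double harmonic; each application of C is taken on the appropriate bidegree). Then C^β[1] is, up to normalisation, the zonal polynomial associated with the Gegenbauer polynomial C_β^{(m/2−1)}: explicitly, C^β[1] = β! · Σ_{j=0}^{⌊β/2⌋} ((−1)^j / (4^j · (β + m/2 − 2)_{(j)} · j! · (β − 2j)!)) ⟨u,x⟩^{β−2j} |x|^{2j} |u|^{2j}, where (β + m/2 − 2)_{(j)} = (β+m/2−2)(β+m/2−3)⋯(β+m/2−1−j) is the falling factorial; equivalently the coefficient of ⟨u,x⟩^{β−2j}|x|^{2j}|u|^{2j} equals (β! Γ(m/2−1)/(2^β Γ(β+m/2−1))) · (−1)^j 2^{β−2j} Γ(β−j+m/2−1)/(Γ(m/2−1) j! (β−2j)!). (In particular C^β[1] is double harmonic, and for β = 1,2 it equals ⟨u,x⟩ and ⟨u,x⟩² − |x|²|u|²/m respectively.) -/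

import Mathlib

open MvPolynomial

noncomputable section

/-- Polynomials in two vector variables `x = (x_1,…,x_m)` (the `Sum.inl` variables)
and `u = (u_1,…,u_m)` (the `Sum.inr` variables), with complex coefficients. -/
abbrev PP (m : ℕ) := MvPolynomial (Fin m ⊕ Fin m) ℂ

/-- The Laplace operator `Δ_x` in the `x`-variables. -/
def lapX (m : ℕ) (P : PP m) : PP m :=
  ∑ j : Fin m, pderiv (Sum.inl j) (pderiv (Sum.inl j) P)

/-- The Laplace operator `Δ_u` in the `u`-variables. -/
def lapU (m : ℕ) (P : PP m) : PP m :=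
  ∑ j : Fin m, pderiv (Sum.inr j) (pderiv (Sum.inr j) P)

/-- The mixed operator `⟨∂_u,∂_x⟩ = Σ_j ∂_{u_j} ∂_{x_j}`. -/
def dudx (m : ℕ) (P : PP m) : PP m :=
  ∑ j : Fin m, pderiv (Sum.inr j) (pderiv (Sum.inl j) P)

/-- The operator `⟨x,∂_u⟩ = Σ_j x_j ∂_{u_j}`. -/
def xdu (m : ℕ) (P : PP m) : PP m :=
  ∑ j : Fin m, X (Sum.inl j) * pderiv (Sum.inr j) P

/-- The operator `⟨u,∂_x⟩ = Σ_j u_j ∂_{x_j}`. -/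
def udx (m : ℕ) (P : PP m) : PP m :=
  ∑ j : Fin m, X (Sum.inr j) * pderiv (Sum.inl j) P

/-- The polynomial `|x|² = Σ_j x_j²`. -/
def nx2 (m : ℕ) : PP m := ∑ j : Fin m, X (Sum.inl j) ^ 2

/-- The polynomial `|u|² = Σ_j u_j²`. -/
def nu2 (m : ℕ) : PP m := ∑ j : Fin m, X (Sum.inr j) ^ 2

/-- The polynomial `⟨u,x⟩ = Σ_j u_j x_j`. -/
def uxP (m : ℕ) : PP m := ∑ j : Fin m, X (Sum.inr j) * X (Sum.inl j)

/-- `P` is homogeneous of degree `p` in the `x`-variables and `q` in the `u`-variables. -/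
def IsBihom (m p q : ℕ) (P : PP m) : Prop :=
  P.IsWeightedHomogeneous (Sum.elim (fun _ => 1) (fun _ => 0)) p ∧
  P.IsWeightedHomogeneous (Sum.elim (fun _ => 0) (fun _ => 1)) q

/-- `P` belongs to the space `ℋ_{k,l}` of simplicial harmonics. -/
def IsSimp (m k l : ℕ) (P : PP m) : Prop :=
  IsBihom m k l P ∧ lapX m P = 0 ∧ lapU m P = 0 ∧ dudx m P = 0 ∧ xdu m P = 0

/-- The transvector generator `S_x` taken on bidegree `(p,·)`. -/
def opSx (m : ℕ) (p : ℤ) (P : PP m) : PP m :=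
  xdu m P - (2 * (p : ℂ) + m - 2)⁻¹ • (nx2 m * dudx m P)

/-- The transvector generator `S_u` taken on bidegree `(·,q)`. -/
def opSu (m : ℕ) (q : ℤ) (P : PP m) : PP m :=
  udx m P - (2 * (q : ℂ) + m - 2)⁻¹ • (nu2 m * dudx m P)

/-- The transvector generator `A = ⟨∂_u,∂_x⟩`. -/
def opA (m : ℕ) (P : PP m) : PP m := dudx m P

/-- The transvector generator `C` taken on bidegree `(p,q)`. -/
def opC (m : ℕ) (p q : ℤ) (P : PP m) : PP m :=
  uxP m * P - (2 * (p : ℂ) + m - 2)⁻¹ • (nx2 m * udx m P)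
    - (2 * (q : ℂ) + m - 2)⁻¹ • (nu2 m * xdu m P)
    + ((2 * (p : ℂ) + m - 2) * (2 * (q : ℂ) + m - 2))⁻¹ • (nx2 m * (nu2 m * dudx m P))

/-- `SuIter m n q P`: apply `S_u` `n` times to `P`, starting at `u`-degree `q`
(each application raises the `u`-degree by one). -/
def SuIter (m : ℕ) : ℕ → ℤ → PP m → PP m
  | 0, _, P => P
  | n+1, q, P => SuIter m n (q+1) (opSu m q P)

/-- `SxIter m n p P`: apply `S_x` `n` times to `P`, starting at `x`-degree `p`
(each application raises the `x`-degree by one). -/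
def SxIter (m : ℕ) : ℕ → ℤ → PP m → PP m
  | 0, _, P => P
  | n+1, p, P => SxIter m n (p+1) (opSx m p P)

/-- `CIter m n p q P`: apply `C` `n` times to `P`, starting at bidegree `(p,q)`. -/
def CIter (m : ℕ) : ℕ → ℤ → ℤ → PP m → PP m
  | 0, _, _, P => P
  | n+1, p, q, P => CIter m n (p+1) (q+1) (opC m p q P)

/-- `AIter m n P`: apply `A` `n` times to `P`. -/
def AIter (m : ℕ) (n : ℕ) (P : PP m) : PP m := (opA m)^[n] P

/-- The rising factorial `a^{(n)} = a(a+1)⋯(a+n-1)`. -/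
def asc (a : ℂ) : ℕ → ℂ
  | 0 => 1
  | n+1 => asc a n * (a + n)

/-- The falling factorial `a_{(n)} = a(a-1)⋯(a-n+1)`. -/
def desc (a : ℂ) : ℕ → ℂ
  | 0 => 1
  | n+1 => desc a n * (a - n)


namespace Stmt19

variable {m : ℕ}

/-- generic monomial-type polynomial -/
def Gp (m a i j : ℕ) : PP m := uxP m ^ a * (nx2 m ^ i * nu2 m ^ j)

lemma pd_inl_uxP (k : Fin m) : pderiv (Sum.inl k) (uxP m) = X (Sum.inr k) := by
  unfold uxP
  rw [map_sum]
  rw [Finset.sum_eq_single k]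
  · simp [pderiv_mul, pderiv_X_self, pderiv_X_of_ne]
  · intro b _ hb
    simp [pderiv_mul, pderiv_X_of_ne, Sum.inl.injEq, hb]
  · simp

lemma pd_inr_uxP (k : Fin m) : pderiv (Sum.inr k) (uxP m) = X (Sum.inl k) := by
  unfold uxP
  rw [map_sum]
  rw [Finset.sum_eq_single k]
  · simp [pderiv_mul, pderiv_X_self, pderiv_X_of_ne]
  · intro b _ hb
    simp [pderiv_mul, pderiv_X_of_ne, Sum.inr.injEq, hb]
  · simp

lemma pd_inl_nx2 (k : Fin m) : pderiv (Sum.inl k) (nx2 m) = 2 * X (Sum.inl k) := by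
  unfold nx2
  rw [map_sum]
  rw [Finset.sum_eq_single k]
  · simp [pderiv_pow, pderiv_X_self]
  · intro b _ hb
    simp [pderiv_pow, pderiv_X_of_ne, Sum.inl.injEq, hb]
  · simp

lemma pd_inr_nu2 (k : Fin m) : pderiv (Sum.inr k) (nu2 m) = 2 * X (Sum.inr k) := by
  unfold nu2
  rw [map_sum]
  rw [Finset.sum_eq_single k]
  · simp [pderiv_pow, pderiv_X_self]
  · intro b _ hb
    simp [pderiv_pow, pderiv_X_of_ne, Sum.inr.injEq, hb]
  · simp

lemma pd_inr_nx2 (k : Fin m) : pderiv (Sum.inr k) (nx2 m) = 0 := by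
  unfold nx2; rw [map_sum]
  refine Finset.sum_eq_zero fun b _ => ?_
  simp [pderiv_pow, pderiv_X_of_ne]

lemma pd_inl_nu2 (k : Fin m) : pderiv (Sum.inl k) (nu2 m) = 0 := by
  unfold nu2; rw [map_sum]
  refine Finset.sum_eq_zero fun b _ => ?_
  simp [pderiv_pow, pderiv_X_of_ne]

lemma pd_inl_Gp (a i j : ℕ) (k : Fin m) :
    pderiv (Sum.inl k) (Gp m a i j)
      = (a : ℂ) • (X (Sum.inr k) * Gp m (a-1) i j)
        + ((2*i : ℕ) : ℂ) • (X (Sum.inl k) * Gp m a (i-1) j) := by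
  unfold Gp
  simp only [pderiv_mul, pderiv_pow, pd_inl_uxP, pd_inl_nx2, pd_inl_nu2, mul_zero, add_zero,
    smul_eq_C_mul, C_eq_coe_nat]
  push_cast
  ring

lemma pd_inr_Gp (a i j : ℕ) (k : Fin m) :
    pderiv (Sum.inr k) (Gp m a i j)
      = (a : ℂ) • (X (Sum.inl k) * Gp m (a-1) i j)
        + ((2*j : ℕ) : ℂ) • (X (Sum.inr k) * Gp m a i (j-1)) := by
  unfold Gp
  simp only [pderiv_mul, pderiv_pow, pd_inr_uxP, pd_inr_nx2, pd_inr_nu2, mul_zero, zero_mul,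
    add_zero, zero_add, smul_eq_C_mul, C_eq_coe_nat]
  push_cast
  ring

lemma sum_X_inr_inr (G : PP m) :
    ∑ k : Fin m, X (Sum.inr k) * (X (Sum.inr k) * G) = nu2 m * G := by
  unfold nu2
  rw [Finset.sum_mul]
  exact Finset.sum_congr rfl fun k _ => by ring

lemma sum_X_inl_inl (G : PP m) :
    ∑ k : Fin m, X (Sum.inl k) * (X (Sum.inl k) * G) = nx2 m * G := by
  unfold nx2
  rw [Finset.sum_mul]
  exact Finset.sum_congr rfl fun k _ => by ring

lemma sum_X_inr_inl (G : PP m) :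
    ∑ k : Fin m, X (Sum.inr k) * (X (Sum.inl k) * G) = uxP m * G := by
  unfold uxP
  rw [Finset.sum_mul]
  exact Finset.sum_congr rfl fun k _ => by ring

lemma sum_X_inl_inr (G : PP m) :
    ∑ k : Fin m, X (Sum.inl k) * (X (Sum.inr k) * G) = uxP m * G := by
  unfold uxP
  rw [Finset.sum_mul]
  exact Finset.sum_congr rfl fun k _ => by ring

lemma udx_Gp (a i j : ℕ) :
    udx m (Gp m a i j)
      = (a : ℂ) • (nu2 m * Gp m (a-1) i j)
        + ((2*i : ℕ) : ℂ) • (uxP m * Gp m a (i-1) j) := by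
  unfold udx
  simp only [pd_inl_Gp, mul_add, mul_smul_comm]
  rw [Finset.sum_add_distrib, ← Finset.smul_sum, ← Finset.smul_sum,
    sum_X_inr_inr, sum_X_inr_inl]

lemma xdu_Gp (a i j : ℕ) :
    xdu m (Gp m a i j)
      = (a : ℂ) • (nx2 m * Gp m (a-1) i j)
        + ((2*j : ℕ) : ℂ) • (uxP m * Gp m a i (j-1)) := by
  unfold xdu
  simp only [pd_inr_Gp, mul_add, mul_smul_comm]
  rw [Finset.sum_add_distrib, ← Finset.smul_sum, ← Finset.smul_sum,
    sum_X_inl_inl, sum_X_inl_inr]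

lemma dudx_Gp (a i j : ℕ) :
    dudx m (Gp m a i j)
      = ((a*m : ℕ) : ℂ) • Gp m (a-1) i j
        + ((a*(a-1) : ℕ) : ℂ) • (uxP m * Gp m (a-2) i j)
        + ((2*a*j : ℕ) : ℂ) • (nu2 m * Gp m (a-1) i (j-1))
        + ((2*i*a : ℕ) : ℂ) • (nx2 m * Gp m (a-1) (i-1) j)
        + ((4*i*j : ℕ) : ℂ) • (uxP m * Gp m a (i-1) (j-1)) := by
  unfold dudx
  have step : ∀ k : Fin m,
      pderiv (Sum.inr k) (pderiv (Sum.inl k) (Gp m a i j))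
        = (a : ℂ) • Gp m (a-1) i j
          + ((a*(a-1) : ℕ) : ℂ) • (X (Sum.inr k) * (X (Sum.inl k) * Gp m (a-2) i j))
          + ((2*a*j : ℕ) : ℂ) • (X (Sum.inr k) * (X (Sum.inr k) * Gp m (a-1) i (j-1)))
          + ((2*i*a : ℕ) : ℂ) • (X (Sum.inl k) * (X (Sum.inl k) * Gp m (a-1) (i-1) j))
          + ((4*i*j : ℕ) : ℂ) • (X (Sum.inl k) * (X (Sum.inr k) * Gp m a (i-1) (j-1))) := by
    intro k
    rw [pd_inl_Gp]
    rw [map_add, Derivation.map_smul, Derivation.map_smul, pderiv_mul, pderiv_mul, pderiv_X_self,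
      pderiv_X_of_ne (by simp), pd_inr_Gp, pd_inr_Gp]
    simp only [smul_eq_C_mul, C_eq_coe_nat, show a - 1 - 1 = a - 2 from by omega]
    push_cast
    ring
  simp only [step]
  simp only [Finset.sum_add_distrib, ← Finset.smul_sum, sum_X_inr_inr, sum_X_inr_inl,
    sum_X_inl_inl, sum_X_inl_inr, Finset.sum_const, Finset.card_univ, Fintype.card_fin]
  simp only [smul_eq_C_mul, C_eq_coe_nat, nsmul_eq_mul]
  push_cast
  ring

def Bp (m a i : ℕ) : PP m := uxP m ^ a * (nx2 m ^ i * nu2 m ^ i)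

def cc (m b : ℕ) : ℂ := (2 * (b:ℂ) + m - 2)⁻¹

def alphaC (m b j : ℕ) : ℂ := 1 - 4*j*(cc m b) + 4*j^2*(cc m b)^2

def betaC (m b j : ℕ) : ℂ :=
  ((b:ℂ) - 2*j) * (((b:ℂ) - 2*j - 1 + m + 4*j) * (cc m b)^2 - 2 * cc m b)

lemma Bp_eq_Gp (a i : ℕ) : Bp m a i = Gp m a i i := rfl

lemma K1 (a i : ℕ) : uxP m * Bp m a i = Bp m (a+1) i := by
  unfold Bp; ring

lemma K2 (a i : ℕ) :
    nx2 m * udx m (Bp m a i)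
      = (a : ℂ) • Bp m (a-1) (i+1) + ((2*i : ℕ) : ℂ) • Bp m (a+1) i := by
  rw [Bp_eq_Gp, udx_Gp]
  rcases i with _ | i <;>
  · simp only [smul_eq_C_mul, C_eq_coe_nat, Bp, Gp, Nat.add_sub_cancel]
    push_cast
    ring

lemma K3 (a i : ℕ) :
    nu2 m * xdu m (Bp m a i)
      = (a : ℂ) • Bp m (a-1) (i+1) + ((2*i : ℕ) : ℂ) • Bp m (a+1) i := by
  rw [Bp_eq_Gp, xdu_Gp]
  rcases i with _ | i <;>
  · simp only [smul_eq_C_mul, C_eq_coe_nat, Bp, Gp, Nat.add_sub_cancel]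
    push_cast
    ring

lemma K4 (a i : ℕ) :
    nx2 m * (nu2 m * dudx m (Bp m a i))
      = ((a:ℂ) * ((a:ℂ) - 1 + m + 4*i)) • Bp m (a-1) (i+1)
        + ((4*i*i : ℕ) : ℂ) • Bp m (a+1) i := by
  rw [Bp_eq_Gp, dudx_Gp]
  rcases a with _ | _ | a <;> rcases i with _ | i <;>
  · simp only [smul_eq_C_mul, C_mul, C_add, C_sub, C_1, C_0, map_ofNat, C_pow, C_eq_coe_nat, Bp, Gp, Nat.add_sub_cancel, Nat.succ_sub_one]
    push_cast
    ring

lemma opC_Bp (a i : ℕ) :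
    opC m (a + 2*i : ℕ) (a + 2*i : ℕ) (Bp m a i)
      = alphaC m (a+2*i) i • Bp m (a+1) i + betaC m (a+2*i) i • Bp m (a-1) (i+1) := by
  unfold opC
  have hc : ((2 * ((((a + 2*i : ℕ) : ℤ)) : ℂ) + m - 2))⁻¹ = cc m (a + 2*i) := by
    rw [cc]; norm_cast
  rw [K1, K2, K3, K4, mul_inv, hc]
  unfold alphaC betaC
  have hb : ((a + 2*i : ℕ) : ℂ) = (a : ℂ) + 2*i := by push_cast; ring
  rw [hb]
  match_scalars <;> (push_cast; ring)

lemma udx_smul (c : ℂ) (P : PP m) : udx m (c • P) = c • udx m P := by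
  unfold udx
  rw [Finset.smul_sum]
  exact Finset.sum_congr rfl fun k _ => by rw [Derivation.map_smul, mul_smul_comm]

lemma xdu_smul (c : ℂ) (P : PP m) : xdu m (c • P) = c • xdu m P := by
  unfold xdu
  rw [Finset.smul_sum]
  exact Finset.sum_congr rfl fun k _ => by rw [Derivation.map_smul, mul_smul_comm]

lemma dudx_smul (c : ℂ) (P : PP m) : dudx m (c • P) = c • dudx m P := by
  unfold dudx
  rw [Finset.smul_sum]
  exact Finset.sum_congr rfl fun k _ => by rw [Derivation.map_smul, Derivation.map_smul]

lemma opC_smul (p q : ℤ) (c : ℂ) (P : PP m) : opC m p q (c • P) = c • opC m p q P := by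
  unfold opC
  rw [udx_smul, xdu_smul, dudx_smul]
  simp only [smul_add, smul_sub, mul_smul_comm, smul_smul]
  ring_nf

lemma udx_sum {α : Type*} (s : Finset α) (f : α → PP m) :
    udx m (∑ j ∈ s, f j) = ∑ j ∈ s, udx m (f j) := by
  unfold udx
  simp only [map_sum, Finset.mul_sum]
  exact Finset.sum_comm

lemma xdu_sum {α : Type*} (s : Finset α) (f : α → PP m) :
    xdu m (∑ j ∈ s, f j) = ∑ j ∈ s, xdu m (f j) := by
  unfold xdu
  simp only [map_sum, Finset.mul_sum]
  exact Finset.sum_comm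

lemma dudx_sum {α : Type*} (s : Finset α) (f : α → PP m) :
    dudx m (∑ j ∈ s, f j) = ∑ j ∈ s, dudx m (f j) := by
  unfold dudx
  simp only [map_sum]
  exact Finset.sum_comm

lemma opC_sum {α : Type*} (p q : ℤ) (s : Finset α) (f : α → PP m) :
    opC m p q (∑ j ∈ s, f j) = ∑ j ∈ s, opC m p q (f j) := by
  unfold opC
  rw [udx_sum, xdu_sum, dudx_sum]
  simp only [Finset.mul_sum, Finset.smul_sum, Finset.sum_add_distrib, Finset.sum_sub_distrib]

def lamC (m b j : ℕ) : ℂ :=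
  (b.factorial : ℂ) * (-1) ^ j
    / (4 ^ j * desc ((b : ℂ) + m / 2 - 2) j * j.factorial * ((b - 2 * j).factorial : ℂ))

def lam' (m b j : ℕ) : ℂ := if 2*j ≤ b then lamC m b j else 0

def Zb (m b : ℕ) : PP m :=
  ∑ j ∈ Finset.range (b / 2 + 1), lamC m b j • Bp m (b - 2*j) j

lemma desc_succ (a : ℂ) (n : ℕ) : desc a (n+1) = desc a n * (a - n) := rfl

lemma desc_shift (a : ℂ) (n : ℕ) : desc (a+1) n * (a + 1 - n) = (a+1) * desc a n := by
  induction n with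
  | zero => simp [desc]
  | succ n ih =>
    rw [desc_succ, desc_succ]
    push_cast
    linear_combination (a - n) * ih

lemma desc_shift' (a : ℂ) (n : ℕ) : desc (a+1) (n+1) = (a+1) * desc a n := by
  rw [desc_succ]
  exact desc_shift a n

lemma term_ne (hm : 4 < m) (b n : ℕ) (h : n ≤ b) : ((b:ℂ) + (m:ℂ)/2 - 2 - n) ≠ 0 := by
  have e : ((b:ℂ) + (m:ℂ)/2 - 2 - n) = (((b:ℝ) + (m:ℝ)/2 - 2 - n : ℝ) : ℂ) := by
    push_cast; ring
  rw [e, ne_eq, Complex.ofReal_eq_zero]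
  have hm5 : (5:ℝ) ≤ (m:ℝ) := by exact_mod_cast hm
  have hnb : (n:ℝ) ≤ (b:ℝ) := by exact_mod_cast h
  intro hc
  linarith

lemma desc_ne (hm : 4 < m) (b n : ℕ) (h : n ≤ b + 1) :
    desc ((b:ℂ) + (m:ℂ)/2 - 2) n ≠ 0 := by
  induction n with
  | zero => simp [desc]
  | succ n ih =>
    rw [desc_succ]
    exact mul_ne_zero (ih (by omega)) (term_ne hm b n (by omega))

lemma twob_ne (hm : 4 < m) (b : ℕ) : (2*(b:ℂ) + (m:ℂ) - 2) ≠ 0 := by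
  have e : (2*(b:ℂ) + (m:ℂ) - 2) = ((2*(b:ℝ) + (m:ℝ) - 2 : ℝ) : ℂ) := by push_cast; ring
  rw [e, ne_eq, Complex.ofReal_eq_zero]
  have hm5 : (5:ℝ) ≤ (m:ℝ) := by exact_mod_cast hm
  have hb : (0:ℝ) ≤ (b:ℝ) := Nat.cast_nonneg b
  intro hc
  linarith

lemma alpha_div (hm : 4 < m) (b j : ℕ) :
    alphaC m b j = (2*(b:ℂ) + m - 2 - 2*j)^2 / (2*(b:ℂ) + m - 2)^2 := by
  unfold alphaC cc
  field_simp [twob_ne hm b]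
  ring

lemma beta_div (hm : 4 < m) (b j : ℕ) :
    betaC m b j
      = (((b:ℂ) - 2*j) * ((b:ℂ) - 2*j - 1 + m + 4*j - 2*(2*(b:ℂ) + m - 2)))
        / (2*(b:ℂ) + m - 2)^2 := by
  unfold betaC cc
  field_simp [twob_ne hm b]

/-- the key scalar recursion -/
lemma lam_rec_zero (b : ℕ) (hm : 4 < m) :
    lam' m (b+1) 0 = lam' m b 0 * alphaC m b 0 := by
  rw [lam', if_pos (by omega), lam', if_pos (by omega)]
  unfold lamC alphaC
  have h1 : (((b+1).factorial : ℕ) : ℂ) ≠ 0 := Nat.cast_ne_zero.mpr (Nat.factorial_ne_zero _)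
  have h2 : ((b.factorial : ℕ) : ℂ) ≠ 0 := Nat.cast_ne_zero.mpr (Nat.factorial_ne_zero _)
  simp only [pow_zero, Nat.mul_zero, Nat.sub_zero, mul_one, one_mul,
    show ∀ z : ℂ, desc z 0 = 1 from fun z => rfl, Nat.cast_zero]
  field_simp
  ring

set_option maxHeartbeats 3000000 in
lemma lam_rec_succ (b j : ℕ) (hm : 4 < m) :
    lam' m (b+1) (j+1)
      = lam' m b (j+1) * alphaC m b (j+1) + lam' m b j * betaC m b j := by
  by_cases h1 : 2*(j+1) ≤ b
  · -- main case
    rw [lam', if_pos (by omega), lam', if_pos (by omega), lam', if_pos (by omega)]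
    obtain ⟨a, rfl⟩ : ∃ a, b = a + 2*(j+1) := ⟨b - 2*(j+1), by omega⟩
    rw [alpha_div hm, beta_div hm]
    unfold lamC
    simp only [show a + 2*(j+1) + 1 - 2*(j+1) = a + 1 from by omega,
      show a + 2*(j+1) - 2*(j+1) = a from by omega,
      show a + 2*(j+1) - 2*j = a + 2 from by omega]
    rw [show ((a + 2*(j+1) + 1 : ℕ) : ℂ) + (m:ℂ)/2 - 2
        = (((a + 2*(j+1) : ℕ) : ℂ) + (m:ℂ)/2 - 2) + 1 from by push_cast; ring]
    rw [desc_shift', desc_succ]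
    have hd : desc (((a + 2*(j+1) : ℕ) : ℂ) + (m:ℂ)/2 - 2) j ≠ 0 :=
      desc_ne hm _ _ (by omega)
    have hxj : ((((a + 2*(j+1)) : ℕ) : ℂ) + (m:ℂ)/2 - 2 - j) ≠ 0 :=
      term_ne hm _ _ (by omega)
    have hx1 : (((((a + 2*(j+1)) : ℕ) : ℂ) + (m:ℂ)/2 - 2) + 1) ≠ 0 := by
      have h := term_ne hm (a + 2*(j+1) + 1) 0 (by omega)
      have e : (((a + 2*(j+1) + 1 : ℕ) : ℂ) + (m:ℂ)/2 - 2 - (0:ℕ))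
          = ((((a + 2*(j+1) : ℕ)) : ℂ) + (m:ℂ)/2 - 2) + 1 := by push_cast; ring
      rwa [e] at h
    have hcc : (2*(((a + 2*(j+1) : ℕ)):ℂ) + m - 2) ≠ 0 := twob_ne hm _
    have hfa : ((a.factorial : ℕ) : ℂ) ≠ 0 := Nat.cast_ne_zero.mpr (Nat.factorial_ne_zero _)
    have hfj : ((j.factorial : ℕ) : ℂ) ≠ 0 := Nat.cast_ne_zero.mpr (Nat.factorial_ne_zero _)
    rw [Nat.factorial_succ (a + 2*(j+1)), Nat.factorial_succ j,
      show a+2 = (a+1)+1 from rfl, Nat.factorial_succ (a+1), Nat.factorial_succ a]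
    rw [div_mul_div_comm, div_mul_div_comm]
    have hfj1 : ((((j+1) * j.factorial : ℕ)) : ℂ) ≠ 0 :=
      Nat.cast_ne_zero.mpr (by positivity)
    have hfa1 : ((((a+1) * a.factorial : ℕ)) : ℂ) ≠ 0 :=
      Nat.cast_ne_zero.mpr (by positivity)
    have hfa2 : ((((a+1+1) * ((a+1) * a.factorial) : ℕ)) : ℂ) ≠ 0 :=
      Nat.cast_ne_zero.mpr (by positivity)
    have h4 : (4 : ℂ) ^ (j+1) ≠ 0 := by norm_num
    have h4' : (4 : ℂ) ^ j ≠ 0 := by norm_num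
    have hG2 : (2 * ((a + 2 * (j + 1) : ℕ) : ℂ) + ↑m - 2) ^ 2 ≠ 0 := pow_ne_zero _ hcc
    have hD1 : (4 ^ (j+1) * (((((a + 2 * (j + 1) : ℕ)) : ℂ) + ↑m / 2 - 2 + 1)
          * desc ((((a + 2 * (j + 1) : ℕ)) : ℂ) + ↑m / 2 - 2) j)
          * (((j + 1) * j.factorial : ℕ) : ℂ) * (((a + 1) * a.factorial : ℕ) : ℂ)) ≠ 0 :=
      mul_ne_zero (mul_ne_zero (mul_ne_zero h4 (mul_ne_zero hx1 hd)) hfj1) hfa1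
    have hD2 : (4 ^ (j+1) * (desc ((((a + 2 * (j + 1) : ℕ)) : ℂ) + ↑m / 2 - 2) j
          * ((((a + 2 * (j + 1) : ℕ)) : ℂ) + ↑m / 2 - 2 - ↑j))
          * (((j + 1) * j.factorial : ℕ) : ℂ) * ((a.factorial : ℕ) : ℂ)
          * (2 * ((a + 2 * (j + 1) : ℕ) : ℂ) + ↑m - 2) ^ 2) ≠ 0 :=
      mul_ne_zero (mul_ne_zero (mul_ne_zero (mul_ne_zero h4 (mul_ne_zero hd hxj)) hfj1) hfa) hG2
    have hD3 : (4 ^ j * desc ((((a + 2 * (j + 1) : ℕ)) : ℂ) + ↑m / 2 - 2) j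
          * ((j.factorial : ℕ) : ℂ) * (((a + 1 + 1) * ((a + 1) * a.factorial) : ℕ) : ℂ)
          * (2 * ((a + 2 * (j + 1) : ℕ) : ℂ) + ↑m - 2) ^ 2) ≠ 0 :=
      mul_ne_zero (mul_ne_zero (mul_ne_zero (mul_ne_zero h4' hd) hfj) hfa2) hG2
    rw [div_add_div _ _ hD2 hD3, div_eq_div_iff hD1 (mul_ne_zero hD2 hD3)]
    push_cast
    ring
  · by_cases h2 : b + 1 = 2*(j+1)
    · -- top case, b odd
      obtain rfl : b = 2*j + 1 := by omega
      rw [lam', if_pos (by omega), lam', if_neg (by omega), lam', if_pos (by omega)]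
      rw [zero_mul, zero_add, beta_div hm]
      unfold lamC
      simp only [show 2*j + 1 + 1 - 2*(j+1) = 0 from by omega,
        show 2*j + 1 - 2*j = 1 from by omega, Nat.factorial_zero, Nat.factorial_one]
      rw [show ((2*j + 1 + 1 : ℕ) : ℂ) + (m:ℂ)/2 - 2
          = (((2*j + 1 : ℕ) : ℂ) + (m:ℂ)/2 - 2) + 1 from by push_cast; ring]
      rw [desc_shift']
      have hd : desc (((2*j + 1 : ℕ) : ℂ) + (m:ℂ)/2 - 2) j ≠ 0 :=
        desc_ne hm _ _ (by omega)
      have hx1 : (((((2*j + 1) : ℕ) : ℂ) + (m:ℂ)/2 - 2) + 1) ≠ 0 := by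
        have h := term_ne hm (2*j + 1 + 1) 0 (by omega)
        have e : (((2*j + 1 + 1 : ℕ) : ℂ) + (m:ℂ)/2 - 2 - (0:ℕ))
            = ((((2*j + 1 : ℕ)) : ℂ) + (m:ℂ)/2 - 2) + 1 := by push_cast; ring
        rwa [e] at h
      have hcc : (2*(((2*j + 1 : ℕ)):ℂ) + m - 2) ≠ 0 := twob_ne hm _
      have hfj : ((j.factorial : ℕ) : ℂ) ≠ 0 := Nat.cast_ne_zero.mpr (Nat.factorial_ne_zero _)
      rw [Nat.factorial_succ (2*j + 1), Nat.factorial_succ j]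
      rw [div_mul_div_comm]
      have hfj1 : ((((j+1) * j.factorial : ℕ)) : ℂ) ≠ 0 :=
        Nat.cast_ne_zero.mpr (by positivity)
      have h4 : (4 : ℂ) ^ (j+1) ≠ 0 := by norm_num
      have h4' : (4 : ℂ) ^ j ≠ 0 := by norm_num
      have hG2 : (2 * ((2*j + 1 : ℕ) : ℂ) + ↑m - 2) ^ 2 ≠ 0 := pow_ne_zero _ hcc
      have hone : ((1 : ℕ) : ℂ) ≠ 0 := by norm_num
      have hD1 : (4 ^ (j+1) * (((((2*j + 1 : ℕ)) : ℂ) + ↑m / 2 - 2 + 1)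
            * desc ((((2*j + 1 : ℕ)) : ℂ) + ↑m / 2 - 2) j)
            * (((j + 1) * j.factorial : ℕ) : ℂ) * ((1 : ℕ) : ℂ)) ≠ 0 :=
        mul_ne_zero (mul_ne_zero (mul_ne_zero h4 (mul_ne_zero hx1 hd)) hfj1) hone
      have hD3 : (4 ^ j * desc ((((2*j + 1 : ℕ)) : ℂ) + ↑m / 2 - 2) j
            * ((j.factorial : ℕ) : ℂ) * ((1 : ℕ) : ℂ)
            * (2 * ((2*j + 1 : ℕ) : ℂ) + ↑m - 2) ^ 2) ≠ 0 :=
        mul_ne_zero (mul_ne_zero (mul_ne_zero (mul_ne_zero h4' hd) hfj) hone) hG2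
      rw [div_eq_div_iff hD1 hD3]
      push_cast
      ring
    · by_cases h3 : b = 2*j
      · -- vanishing beta case, b even
        subst h3
        rw [lam', if_neg (by omega), lam', if_neg (by omega), lam', if_pos (by omega)]
        have hz : betaC m (2*j) j = 0 := by
          rw [betaC, show (((2*j : ℕ)):ℂ) - 2*j = 0 from by push_cast; ring, zero_mul]
        rw [hz]
        simp
      · -- out of range
        rw [lam', if_neg (by omega), lam', if_neg (by omega), lam', if_neg (by omega)]
        simp

lemma Zb_step (b : ℕ) (hm : 4 < m) :
    opC m (b : ℕ) (b : ℕ) (Zb m b) = Zb m (b+1) := by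
  -- B'' function for the shifted sum
  set N := b/2 + 2 with hN
  have hZ' : Zb m b = ∑ j ∈ Finset.range N, lam' m b j • Bp m (b - 2*j) j := by
    rw [Zb, Finset.sum_range_succ (n := b/2 + 1)]
    have h0 : lam' m b (b/2+1) = 0 := by
      rw [lam', if_neg (by omega)]
    rw [h0, zero_smul, add_zero]
    exact Finset.sum_congr rfl fun j hj => by
      rw [lam', if_pos (by simp at hj; omega)]
  rw [hZ', opC_sum]
  have step : ∀ j ∈ Finset.range N,
      opC m (b:ℕ) (b:ℕ) (lam' m b j • Bp m (b - 2*j) j)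
        = (lam' m b j * alphaC m b j) • Bp m (b + 1 - 2*j) j
          + (lam' m b j * betaC m b j) • Bp m (b + 1 - 2*(j+1)) (j+1) := by
    intro j hj
    rw [opC_smul]
    by_cases h : 2*j ≤ b
    · have ha : (b - 2*j) + 2*j = b := by omega
      have h1 : b - 2*j + 1 = b + 1 - 2*j := by omega
      have h2 : b - 2*j - 1 = b + 1 - 2*(j+1) := by omega
      have := opC_Bp (m := m) (b - 2*j) j
      rw [ha, h1, h2] at this
      rw [this, smul_add, smul_smul, smul_smul]
    · rw [lam', if_neg h]
      simp
  rw [Finset.sum_congr rfl step]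
  rw [Finset.sum_add_distrib]
  -- shift the second sum
  have hshift :
      ∑ j ∈ Finset.range N, (lam' m b j * betaC m b j) • Bp m (b + 1 - 2*(j+1)) (j+1)
        = ∑ j ∈ Finset.range (N+1),
            (fun j => match j with
              | 0 => (0 : PP m)
              | j+1 => (lam' m b j * betaC m b j) • Bp m (b + 1 - 2*(j+1)) (j+1)) j := by
    rw [Finset.sum_range_succ' _ N]
    simp
  rw [hshift]
  have hpadA : ∑ j ∈ Finset.range N, (lam' m b j * alphaC m b j) • Bp m (b + 1 - 2*j) j
      = ∑ j ∈ Finset.range (N+1), (lam' m b j * alphaC m b j) • Bp m (b + 1 - 2*j) j := by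
    symm
    rw [Finset.sum_range_succ]
    rw [show lam' m b N = 0 from by rw [lam', if_neg (by omega)]]
    simp
  rw [hpadA, ← Finset.sum_add_distrib]
  have hpadZ : Zb m (b+1)
      = ∑ j ∈ Finset.range (N+1), lam' m (b+1) j • Bp m (b + 1 - 2*j) j := by
    have h1 : ∑ j ∈ Finset.range (N+1), lam' m (b+1) j • Bp m (b + 1 - 2*j) j
        = ∑ j ∈ Finset.range ((b+1)/2+1), lam' m (b+1) j • Bp m (b + 1 - 2*j) j := by
      symm
      apply Finset.sum_subset (Finset.range_subset_range.mpr (by omega))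
      intro j _ hj
      simp only [Finset.mem_range] at hj
      rw [lam', if_neg (by omega)]
      simp
    rw [h1, Zb]
    exact Finset.sum_congr rfl fun j hj => by
      rw [lam', if_pos (by simp only [Finset.mem_range] at hj; omega)]
  rw [hpadZ]
  refine Finset.sum_congr rfl fun j hj => ?_
  match j with
  | 0 =>
    show (lam' m b 0 * alphaC m b 0) • Bp m (b + 1 - 2*0) 0 + 0
        = lam' m (b+1) 0 • Bp m (b + 1 - 2*0) 0
    rw [add_zero, lam_rec_zero b hm]
  | j+1 =>
    show (lam' m b (j+1) * alphaC m b (j+1)) • Bp m (b + 1 - 2*(j+1)) (j+1)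
          + (lam' m b j * betaC m b j) • Bp m (b + 1 - 2*(j+1)) (j+1)
        = lam' m (b+1) (j+1) • Bp m (b + 1 - 2*(j+1)) (j+1)
    rw [← add_smul, lam_rec_succ b j hm]

lemma CIter_Z (hm : 4 < m) : ∀ n b : ℕ, CIter m n (b:ℤ) (b:ℤ) (Zb m b) = Zb m (b+n) := by
  intro n
  induction n with
  | zero => intro b; rfl
  | succ n ih =>
    intro b
    show CIter m (n+1) (b:ℤ) (b:ℤ) (Zb m b) = _
    rw [CIter, Zb_step b hm, show ((b:ℤ)+1) = ((b+1 : ℕ) : ℤ) from by push_cast; ring,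
      ih (b+1)]
    congr 1
    omega

lemma Zb_zero : Zb m 0 = 1 := by
  rw [Zb, Finset.sum_range_one]
  norm_num [lamC, Bp, show ∀ z : ℂ, desc z 0 = 1 from fun _ => rfl]

end Stmt19

/-- `C^β[1]` is the zonal (Gegenbauer) polynomial:
`C^β[1] = β! Σ_{j=0}^{⌊β/2⌋} ((−1)^j/(4^j (β+m/2−2)_{(j)} j! (β−2j)!))
⟨u,x⟩^{β−2j} |x|^{2j} |u|^{2j}`. -/
theorem stmt_19 (m b : ℕ) (hm : 4 < m) :
    CIter m b 0 0 1
      = ∑ j ∈ Finset.range (b / 2 + 1),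
          ((b.factorial : ℂ) * (-1) ^ j
              / (4 ^ j * desc ((b : ℂ) + m / 2 - 2) j * j.factorial
                  * ((b - 2 * j).factorial : ℂ))) •
            (uxP m ^ (b - 2 * j) * (nx2 m ^ j * nu2 m ^ j)) := by
  have h := Stmt19.CIter_Z (m := m) hm b 0
  rw [Stmt19.Zb_zero] at h
  norm_num at h
  rw [show (0 : ℤ) = ((0:ℕ) : ℤ) from rfl] at h ⊢
  exact h
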